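/- Let F be a finite field and let m, n be integers with 2 ≤ m and m dividing n. Let χ be a multiplicative character of F with values in ℂ (extended by χ(0) = 0) such that χ^m is the trivial character. Then ∑_{x ∈ F} ∑_{y ∈ F} χ(f_n(x,y)) = ∑_{x ∈ F} ∑_{y ∈ F} χ(f_m(x,y)), where f_k(x,y) = (xy)^{k−1}(1−x)(1−y)(1−xy)^{k−1} for any integer k ≥ 2. -/
import Mathlib


/-- The polynomial `f_k(x,y) = (xy)^{k-1}(1-x)(1-y)(1-xy)^{k-1}`. -/
def fpoly (k : ℕ) {F : Type*} [CommRing F] (x y : F) : F :=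
  (x * y) ^ (k - 1) * (1 - x) * (1 - y) * (1 - x * y) ^ (k - 1)

/-- Section 5.5 of the paper: if `χ` is a multiplicative character of a finite
field `F` with `χ^m` trivial and `m ∣ n` (both at least `2`), then the
character sum of `χ ∘ f_n` equals that of `χ ∘ f_m`. -/
theorem char_sum_divisor
    {F : Type*} [Field F] [Fintype F]
    (m n : ℕ) (hm : 2 ≤ m) (hn : 2 ≤ n) (hmn : m ∣ n)
    (χ : MulChar F ℂ) (htriv : χ ^ m = 1) :
    ∑ x : F, ∑ y : F, χ (fpoly n x y) = ∑ x : F, ∑ y : F, χ (fpoly m x y) := by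
  refine Finset.sum_congr rfl fun x _ => Finset.sum_congr rfl fun y _ => ?_
  set t : F := x * y * (1 - x * y) with ht
  have key : ∀ k : ℕ, fpoly k x y = t ^ (k - 1) * ((1 - x) * (1 - y)) := by
    intro k
    simp only [fpoly, ht, mul_pow]
    ring
  rw [key n, key m]; simp only [map_mul, map_pow]
  congr 1
  rcases eq_or_ne t 0 with h0 | h0
  · rw [h0, χ.map_zero]
    rw [zero_pow (by omega), zero_pow (by omega)]
  · have hu : χ t ^ m = 1 := by
      have := congrFun (congrArg (fun ψ : MulChar F ℂ => ψ.toFun) htriv) t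
      simpa [MulChar.pow_apply' χ (by omega : m ≠ 0) t,
        MulChar.one_apply (IsUnit.mk0 t h0)] using this
    obtain ⟨c, rfl⟩ := hmn
    have hc : 1 ≤ c := by nlinarith
    have : m * c - 1 = (m - 1) + m * (c - 1) := by
      cases c with
      | zero => omega
      | succ c' => cases m with
        | zero => omega
        | succ m' =>
          have h1 : (m' + 1) * (c' + 1) = m' * c' + m' + c' + 1 := by ring
          have h2 : (m' + 1) * c' = m' * c' + c' := by ring
          simp only [Nat.add_sub_cancel]
          omega
    rw [this, pow_add, pow_mul, hu, one_pow, mul_one]
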